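/- Let W=(w_{ij}) be a positive real m×n matrix and let R=(r_1,…,r_m), C=(c_1,…,c_n) be positive integer vectors with |R|=|C|=N. Then T(R,C;W) ≤ N^{-N} · min{ω(R), ω(C)} · ∫_{Mat(m,n)} f(G;R,C)^N dG, where dG is the exponential measure associated with W. -/

import Mathlib

open scoped BigOperators
open MeasureTheory
open scoped ENNReal NNReal
open Finset


/-- The total weight `T(R,C;W)` of contingency tables with row sums `R`,
column sums `C`, and weight `∏ W i j ^ D i j` (with the convention `0 ^ 0 = 1`). -/
noncomputable def tableWeight {m n : ℕ} (R : Fin m → ℕ) (C : Fin n → ℕ)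
    (W : Fin m → Fin n → ℝ) : ℝ :=
  ∑' D : {D : Fin m → Fin n → ℕ //
      (∀ i, ∑ j, D i j = R i) ∧ (∀ j, ∑ i, D i j = C j)},
    ∏ i, ∏ j, W i j ^ D.1 i j

/-- `ω(B) = ∏ i, B i ^ (B i) / (B i)!` for a positive integer vector `B`. -/
noncomputable def omegaVec {l : ℕ} (B : Fin l → ℕ) : ℝ :=
  ∏ i, ((B i : ℝ) ^ (B i)) / (Nat.factorial (B i) : ℝ)

/-- `f(G;R,C)`: the infimum of `F(G;x,y) = ∑ i j, G i j * x i * y j` over positive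
vectors `x, y` satisfying `∏ i, x i ^ R i = 1` and `∏ j, y j ^ C j = 1`. -/
noncomputable def scalingInf {m n : ℕ} (G : Fin m → Fin n → ℝ)
    (R : Fin m → ℝ) (C : Fin n → ℝ) : ℝ :=
  sInf {z : ℝ | ∃ (x : Fin m → ℝ) (y : Fin n → ℝ),
    (∀ i, 0 < x i) ∧ (∀ j, 0 < y j) ∧
    (∏ i, x i ^ R i) = 1 ∧ (∏ j, y j ^ C j) = 1 ∧
    z = ∑ i, ∑ j, G i j * x i * y j}

/-- The exponential measure `dG` on `Mat(m,n)` associated with a positive matrix `W`: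
its density w.r.t. Lebesgue measure is `∏ i j, (W i j)⁻¹ exp (-(G i j) / W i j)` on
matrices with all entries positive, and `0` elsewhere. -/
noncomputable def expMeasure {m n : ℕ} (W : Fin m → Fin n → ℝ) :
    Measure (Fin m → Fin n → ℝ) :=
  volume.withDensity fun G =>
    ENNReal.ofReal (∏ i, ∏ j,
      if 0 < G i j then (W i j)⁻¹ * Real.exp (-(G i j) / W i j) else 0)



lemma tables_finite (m n : ℕ) (R : Fin m → ℕ) (C : Fin n → ℕ) :
    Finite {D : Fin m → Fin n → ℕ // (∀ i, ∑ j, D i j = R i) ∧ (∀ j, ∑ i, D i j = C j)} := by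
  apply Finite.of_injective (f := fun D : {D : Fin m → Fin n → ℕ //
      (∀ i, ∑ j, D i j = R i) ∧ (∀ j, ∑ i, D i j = C j)} =>
    (fun i j => (⟨D.1 i j, by
      have h1 : D.1 i j ≤ R i := by
        rw [← D.2.1 i]
        exact Finset.single_le_sum (fun _ _ => Nat.zero_le _) (Finset.mem_univ j)
      have h2 : R i ≤ ∑ i', R i' :=
        Finset.single_le_sum (fun _ _ => Nat.zero_le _) (Finset.mem_univ i)
      exact Nat.lt_succ_of_le (h1.trans h2)⟩ : Fin (∑ i', R i' + 1)) :
        Fin m → Fin n → Fin (∑ i', R i' + 1)))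
  intro D E h
  apply Subtype.ext
  funext i j
  simpa using congrFun (congrFun h i) j

noncomputable instance tablesFintype (m n : ℕ) (R : Fin m → ℕ) (C : Fin n → ℕ) :
    Fintype {D : Fin m → Fin n → ℕ // (∀ i, ∑ j, D i j = R i) ∧ (∀ j, ∑ i, D i j = C j)} :=
  @Fintype.ofFinite _ (tables_finite m n R C)

lemma oneD_integrable {w : ℝ} (hw : 0 < w) (d : ℕ) :
    Integrable (fun t : ℝ => (if 0 < t then w⁻¹ * Real.exp (-t/w) else 0) * t ^ d) := by
  have heq : (fun t : ℝ => (if 0 < t then w⁻¹ * Real.exp (-t/w) else 0) * t ^ d)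
      = Set.indicator (Set.Ioi 0) (fun t : ℝ => w⁻¹ * Real.exp (-t/w) * t ^ d) := by
    funext t
    by_cases h : 0 < t <;> simp [Set.indicator, h]
  rw [heq, integrable_indicator_iff measurableSet_Ioi]
  have h0 : IntegrableOn (fun t : ℝ => t ^ ((d : ℝ)) * Real.exp (-w⁻¹ * t ^ (1:ℝ)))
      (Set.Ioi 0) := integrableOn_rpow_mul_exp_neg_mul_rpow
        (lt_of_lt_of_le (by norm_num) (Nat.cast_nonneg d)) zero_lt_one (by positivity)
  have h1 : IntegrableOn (fun t : ℝ => t ^ d * Real.exp (-w⁻¹ * t)) (Set.Ioi 0) := by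
    apply h0.congr_fun _ measurableSet_Ioi
    intro t ht
    simp only [Real.rpow_one, Real.rpow_natCast]
  have h2 : IntegrableOn (fun t : ℝ => w⁻¹ * (t ^ d * Real.exp (-w⁻¹ * t))) (Set.Ioi 0) :=
    h1.const_mul w⁻¹
  apply h2.congr_fun _ measurableSet_Ioi
  intro t ht
  have harg : -t/w = -w⁻¹ * t := by ring
  simp only [harg]
  ring

lemma oneD_integral {w : ℝ} (hw : 0 < w) (d : ℕ) :
    ∫ t : ℝ, (if 0 < t then w⁻¹ * Real.exp (-t/w) else 0) * t ^ d
      = (Nat.factorial d : ℝ) * w ^ d := by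
  have heq : (fun t : ℝ => (if 0 < t then w⁻¹ * Real.exp (-t/w) else 0) * t ^ d)
      = Set.indicator (Set.Ioi 0) (fun t : ℝ => w⁻¹ * Real.exp (-t/w) * t ^ d) := by
    funext t
    by_cases h : 0 < t <;> simp [Set.indicator, h]
  rw [heq, integral_indicator measurableSet_Ioi]
  have hcong : ∀ t ∈ Set.Ioi (0:ℝ), w⁻¹ * Real.exp (-t/w) * t ^ d
      = w⁻¹ * (t ^ ((d:ℝ) + 1 - 1) * Real.exp (-(w⁻¹ * t))) := by
    intro t ht
    rw [Set.mem_Ioi] at ht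
    rw [add_sub_cancel_right, Real.rpow_natCast]
    have harg : -t/w = -(w⁻¹*t) := by ring
    rw [harg]
    ring
  rw [MeasureTheory.setIntegral_congr_fun measurableSet_Ioi hcong,
    integral_const_mul,
    Real.integral_rpow_mul_exp_neg_mul_Ioi (by positivity) (by positivity),
    one_div, inv_inv]
  have hp : w ^ ((d:ℝ)+1) = w ^ (d+1) := by
    rw [show ((d:ℝ)+1) = ((d+1:ℕ):ℝ) by push_cast; ring, Real.rpow_natCast]
  rw [hp, Real.Gamma_nat_eq_factorial]
  field_simp
  ring

section Dens
variable {m n : ℕ} (W : Fin m → Fin n → ℝ)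

noncomputable def densW : (Fin m → Fin n → ℝ) → ℝ := fun G =>
  ∏ i, ∏ j, if 0 < G i j then (W i j)⁻¹ * Real.exp (-(G i j) / W i j) else 0

lemma densW_meas : Measurable (densW W) := by
  apply Finset.measurable_prod
  intro i _
  apply Finset.measurable_prod
  intro j _
  have hev : Measurable fun G : Fin m → Fin n → ℝ => G i j :=
    (measurable_pi_apply j).comp (measurable_pi_apply i)
  exact Measurable.ite (measurableSet_lt measurable_const hev)
    (measurable_const.mul (Real.measurable_exp.comp (hev.neg.div_const _)))
    measurable_const

lemma densW_nonneg (hW : ∀ i j, 0 < W i j) (G : Fin m → Fin n → ℝ) : 0 ≤ densW W G := by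
  apply Finset.prod_nonneg
  intro i _
  apply Finset.prod_nonneg
  intro j _
  split
  · exact mul_nonneg (inv_nonneg.mpr (hW i j).le) (Real.exp_nonneg _)
  · exact le_rfl

lemma expMeasure_eq :
    expMeasure W = volume.withDensity (fun G => ((Real.toNNReal (densW W G) : ℝ≥0) : ℝ≥0∞)) := rfl

lemma integrable_expMeasure_iff (hW : ∀ i j, 0 < W i j) (f : (Fin m → Fin n → ℝ) → ℝ) :
    Integrable f (expMeasure W) ↔ Integrable (fun G => densW W G * f G) volume := by
  rw [expMeasure_eq, integrable_withDensity_iff_integrable_smul (densW_meas W).real_toNNReal]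
  have : (fun G => Real.toNNReal (densW W G) • f G) = fun G => densW W G * f G := by
    funext G
    rw [NNReal.smul_def, Real.coe_toNNReal _ (densW_nonneg W hW G), smul_eq_mul]
  rw [this]

lemma integral_expMeasure (hW : ∀ i j, 0 < W i j) (f : (Fin m → Fin n → ℝ) → ℝ) :
    ∫ G, f G ∂(expMeasure W) = ∫ G, densW W G * f G := by
  rw [expMeasure_eq, integral_withDensity_eq_integral_smul (densW_meas W).real_toNNReal]
  congr 1
  funext G
  rw [NNReal.smul_def, Real.coe_toNNReal _ (densW_nonneg W hW G), smul_eq_mul]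

lemma densW_mul_monomial (d : Fin m → Fin n → ℕ) :
    (fun G => densW W G * ∏ i, ∏ j, (G i j) ^ (d i j))
      = fun G => ∏ i, ∏ j, ((if 0 < G i j then (W i j)⁻¹ * Real.exp (-(G i j) / W i j) else 0)
          * (G i j) ^ (d i j)) := by
  funext G
  rw [densW]
  simp only [Finset.prod_mul_distrib]

lemma monomial_integrable_vol (hW : ∀ i j, 0 < W i j) (d : Fin m → Fin n → ℕ) :
    Integrable (fun G : Fin m → Fin n → ℝ =>
      ∏ i, ∏ j, ((if 0 < G i j then (W i j)⁻¹ * Real.exp (-(G i j) / W i j) else 0)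
        * (G i j) ^ (d i j))) volume := by
  have inner : ∀ i, Integrable (fun v : Fin n → ℝ =>
      ∏ j, ((if 0 < v j then (W i j)⁻¹ * Real.exp (-(v j) / W i j) else 0) * (v j) ^ (d i j))) := by
    intro i
    exact Integrable.fintype_prod_dep (𝕜 := ℝ) (fun j => oneD_integrable (hW i j) (d i j))
  exact Integrable.fintype_prod_dep (𝕜 := ℝ) (E := fun _ : Fin m => Fin n → ℝ)
    (f := fun i v => ∏ j, ((if 0 < v j then (W i j)⁻¹ * Real.exp (-(v j) / W i j) else 0)
      * (v j) ^ (d i j))) inner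

lemma monomial_integral_vol (hW : ∀ i j, 0 < W i j) (d : Fin m → Fin n → ℕ) :
    ∫ G : Fin m → Fin n → ℝ,
      ∏ i, ∏ j, ((if 0 < G i j then (W i j)⁻¹ * Real.exp (-(G i j) / W i j) else 0)
        * (G i j) ^ (d i j))
      = ∏ i, ∏ j, ((Nat.factorial (d i j) : ℝ) * (W i j) ^ (d i j)) := by
  have h1 : ∫ G : Fin m → Fin n → ℝ,
      ∏ i, ∏ j, ((if 0 < G i j then (W i j)⁻¹ * Real.exp (-(G i j) / W i j) else 0)
        * (G i j) ^ (d i j))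
      = ∏ i, ∫ v : Fin n → ℝ,
          ∏ j, ((if 0 < v j then (W i j)⁻¹ * Real.exp (-(v j) / W i j) else 0)
            * (v j) ^ (d i j)) :=
    MeasureTheory.integral_fintype_prod_eq_prod (ι := Fin m) (E := fun _ => Fin n → ℝ)
      (f := fun i v => ∏ j, ((if 0 < v j then (W i j)⁻¹ * Real.exp (-(v j) / W i j) else 0)
        * (v j) ^ (d i j)))
  rw [h1]
  apply Finset.prod_congr rfl
  intro i _
  have h2 : ∫ v : Fin n → ℝ,
      ∏ j, ((if 0 < v j then (W i j)⁻¹ * Real.exp (-(v j) / W i j) else 0) * (v j) ^ (d i j))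
      = ∏ j, ∫ t : ℝ, ((if 0 < t then (W i j)⁻¹ * Real.exp (-t / W i j) else 0) * t ^ (d i j)) :=
    MeasureTheory.integral_fintype_prod_eq_prod (ι := Fin n) (E := fun _ => ℝ)
      (f := fun j t => ((if 0 < t then (W i j)⁻¹ * Real.exp (-t / W i j) else 0) * t ^ (d i j)))
  rw [h2]
  exact Finset.prod_congr rfl fun j _ => oneD_integral (hW i j) (d i j)

end Dens

section SInf
variable {m n : ℕ}

def posMat (m n : ℕ) : Set (Fin m → Fin n → ℝ) := {G | ∀ i j, 0 < G i j}

def scSet (G : Fin m → Fin n → ℝ) (R : Fin m → ℝ) (C : Fin n → ℝ) : Set ℝ :=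
  {z : ℝ | ∃ (x : Fin m → ℝ) (y : Fin n → ℝ),
    (∀ i, 0 < x i) ∧ (∀ j, 0 < y j) ∧
    (∏ i, x i ^ R i) = 1 ∧ (∏ j, y j ^ C j) = 1 ∧
    z = ∑ i, ∑ j, G i j * x i * y j}

lemma scalingInf_eq_sInf (G : Fin m → Fin n → ℝ) (R : Fin m → ℝ) (C : Fin n → ℝ) :
    scalingInf G R C = sInf (scSet G R C) := rfl

lemma isOpen_posMat : IsOpen (posMat m n) := by
  have h : posMat m n = ⋂ i, ⋂ j, (fun G : Fin m → Fin n → ℝ => G i j) ⁻¹' Set.Ioi 0 := by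
    ext G; simp [posMat]
  rw [h]
  exact isOpen_iInter_of_finite fun i => isOpen_iInter_of_finite fun j =>
    isOpen_Ioi.preimage ((continuous_apply j).comp (continuous_apply i))

lemma measurableSet_posMat : MeasurableSet (posMat m n) := isOpen_posMat.measurableSet

lemma expMeasure_compl_posMat (W : Fin m → Fin n → ℝ) :
    expMeasure W (posMat m n)ᶜ = 0 := by
  rw [expMeasure, withDensity_apply _ measurableSet_posMat.compl]
  have h : ∀ G ∈ (posMat m n)ᶜ,
      ENNReal.ofReal (∏ i, ∏ j,
        if 0 < G i j then (W i j)⁻¹ * Real.exp (-(G i j) / W i j) else 0) = 0 := by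
    intro G hG
    simp only [posMat, Set.mem_compl_iff, Set.mem_setOf_eq, not_forall] at hG
    obtain ⟨i, j, hij⟩ := hG
    have hj : (∏ j', if 0 < G i j' then (W i j')⁻¹ * Real.exp (-(G i j') / W i j') else 0) = 0 :=
      Finset.prod_eq_zero (Finset.mem_univ j) (if_neg hij)
    rw [Finset.prod_eq_zero (Finset.mem_univ i) hj, ENNReal.ofReal_zero]
  rw [setLIntegral_congr_fun_ae measurableSet_posMat.compl
    (Filter.Eventually.of_forall h), lintegral_zero]

lemma ae_posMat (W : Fin m → Fin n → ℝ) : ∀ᵐ G ∂(expMeasure W), G ∈ posMat m n := by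
  rw [ae_iff]
  have h : {G : Fin m → Fin n → ℝ | ¬ G ∈ posMat m n} = (posMat m n)ᶜ := rfl
  rw [h]
  exact expMeasure_compl_posMat W

variable (G : Fin m → Fin n → ℝ) (R : Fin m → ℝ) (C : Fin n → ℝ)

lemma SSet_mem_sum : (∑ i, ∑ j, G i j) ∈ scSet G R C := by
  refine ⟨fun _ => 1, fun _ => 1, fun _ => one_pos, fun _ => one_pos, by simp, by simp, by simp⟩

lemma SSet_nonneg (hG : G ∈ posMat m n) : ∀ z ∈ scSet G R C, 0 ≤ z := by
  rintro z ⟨x, y, hx, hy, -, -, rfl⟩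
  exact Finset.sum_nonneg fun i _ => Finset.sum_nonneg fun j _ =>
    le_of_lt (mul_pos (mul_pos (hG i j) (hx i)) (hy j))

lemma SSet_bddBelow (hG : G ∈ posMat m n) : BddBelow (scSet G R C) :=
  ⟨0, fun z hz => SSet_nonneg G R C hG z hz⟩

lemma scalingInf_nonneg (hG : G ∈ posMat m n) : 0 ≤ scalingInf G R C :=
  Real.sInf_nonneg (SSet_nonneg G R C hG)

lemma scalingInf_le_sum (hG : G ∈ posMat m n) : scalingInf G R C ≤ ∑ i, ∑ j, G i j :=
  csInf_le (SSet_bddBelow G R C hG) (SSet_mem_sum G R C)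

lemma scalingInf_le (hG : G ∈ posMat m n) {z : ℝ} (hz : z ∈ scSet G R C) :
    scalingInf G R C ≤ z :=
  csInf_le (SSet_bddBelow G R C hG) hz

lemma convex_posMat : Convex ℝ (posMat m n) := by
  intro G1 h1 G2 h2 a b ha hb hab
  intro i j
  simp only [Pi.add_apply, Pi.smul_apply, smul_eq_mul]
  rcases ha.lt_or_eq with ha' | ha''
  · exact add_pos_of_pos_of_nonneg (mul_pos ha' (h1 i j)) (mul_nonneg hb (h2 i j).le)
  · have hb1 : b = 1 := by rw [← ha''] at hab; simpa using hab
    rw [← ha'', hb1]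
    simpa using h2 i j

lemma concaveOn_scalingInf :
    ConcaveOn ℝ (posMat m n) (fun G : Fin m → Fin n → ℝ => scalingInf G R C) := by
  refine ⟨convex_posMat, ?_⟩
  intro G1 h1 G2 h2 a b ha hb hab
  apply le_csInf ⟨_, SSet_mem_sum (a • G1 + b • G2) R C⟩
  rintro z ⟨x, y, hx, hy, hxR, hyC, rfl⟩
  have hsum : (∑ i, ∑ j, (a • G1 + b • G2) i j * x i * y j)
      = a * (∑ i, ∑ j, G1 i j * x i * y j) + b * (∑ i, ∑ j, G2 i j * x i * y j) := by
    simp only [Pi.add_apply, Pi.smul_apply, smul_eq_mul, Finset.mul_sum,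
      ← Finset.sum_add_distrib]
    refine Finset.sum_congr rfl fun i _ => Finset.sum_congr rfl fun j _ => by ring
  rw [hsum]
  have e1 : scalingInf G1 R C ≤ ∑ i, ∑ j, G1 i j * x i * y j :=
    scalingInf_le G1 R C h1 ⟨x, y, hx, hy, hxR, hyC, rfl⟩
  have e2 : scalingInf G2 R C ≤ ∑ i, ∑ j, G2 i j * x i * y j :=
    scalingInf_le G2 R C h2 ⟨x, y, hx, hy, hxR, hyC, rfl⟩
  simp only [smul_eq_mul]
  exact add_le_add (mul_le_mul_of_nonneg_left e1 ha) (mul_le_mul_of_nonneg_left e2 hb)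

lemma continuousOn_scalingInf :
    ContinuousOn (fun G : Fin m → Fin n → ℝ => scalingInf G R C) (posMat m n) :=
  (concaveOn_scalingInf R C).continuousOn isOpen_posMat

lemma aemeasurable_scalingInf (W : Fin m → Fin n → ℝ) :
    AEMeasurable (fun G : Fin m → Fin n → ℝ => scalingInf G R C) (expMeasure W) := by
  have h := (continuousOn_scalingInf (m := m) (n := n) R C).aemeasurable measurableSet_posMat
    (μ := expMeasure W)
  rwa [Measure.restrict_eq_self_of_ae_mem (ae_posMat W)] at h

end SInf

lemma amgm_pow {n N : ℕ} (hN : 0 < N) (C : Fin n → ℕ) (hCpos : ∀ j, 0 < C j)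
    (hCN : ∑ j, C j = N) (s : Fin n → ℝ) (hs : ∀ j, 0 ≤ s j) :
    ∏ j, s j ^ (C j) ≤ (∏ j, ((C j : ℝ)) ^ (C j)) * (((N:ℝ))^N)⁻¹ * (∑ j, s j)^N := by
  have hNne : (N:ℝ) ≠ 0 := Nat.cast_ne_zero.mpr hN.ne'
  have hCne : ∀ j, ((C j : ℝ)) ≠ 0 := fun j => Nat.cast_ne_zero.mpr (hCpos j).ne'
  set w : Fin n → ℝ := fun j => (C j : ℝ)/N with hw_def
  set z : Fin n → ℝ := fun j => s j * N / C j with hz_def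
  have hw : ∀ j ∈ univ, 0 ≤ w j := fun j _ => by positivity
  have hw1 : ∑ j, w j = 1 := by
    rw [hw_def, ← Finset.sum_div, ← Nat.cast_sum, hCN, div_self hNne]
  have hz : ∀ j ∈ univ, 0 ≤ z j := fun j _ => by
    have := hs j; positivity
  have hAG := Real.geom_mean_le_arith_mean_weighted univ w z hw hw1 hz
  have hAG' : ∏ j, z j ^ (w j) ≤ ∑ j, s j := by
    refine hAG.trans_eq (Finset.sum_congr rfl fun j _ => ?_)
    rw [hw_def, hz_def, div_mul_div_comm, div_eq_iff (mul_ne_zero hNne (hCne j))]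
    ring
  have hA0 : 0 ≤ ∏ j, z j ^ (w j) :=
    Finset.prod_nonneg fun j _ => Real.rpow_nonneg (hz j (mem_univ j)) _
  have hpow : (∏ j, z j ^ (w j))^N ≤ (∑ j, s j)^N := pow_le_pow_left₀ hA0 hAG' N
  have hL : (∏ j, z j ^ (w j))^N = ∏ j, z j ^ (C j) := by
    rw [← Finset.prod_pow]
    refine Finset.prod_congr rfl fun j _ => ?_
    rw [← Real.rpow_natCast (z j ^ w j) N, ← Real.rpow_mul (hz j (mem_univ j))]
    have : w j * N = (C j : ℝ) := by rw [hw_def]; field_simp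
    rw [this, Real.rpow_natCast]
  have hzj : ∀ j, z j ^ (C j) = s j ^ (C j) * ((N:ℝ) ^ (C j) / ((C j:ℝ)) ^ (C j)) := by
    intro j
    rw [hz_def]
    rw [div_pow, mul_pow, mul_div_assoc]
  have hNN : ∏ j, ((N:ℝ)) ^ (C j) = ((N:ℝ))^N := by
    rw [Finset.prod_pow_eq_pow_sum, hCN]
  have key : (∏ j, s j ^ (C j)) * (((N:ℝ))^N / ∏ j, ((C j:ℝ)) ^ (C j)) ≤ (∑ j, s j)^N := by
    calc (∏ j, s j ^ (C j)) * (((N:ℝ))^N / ∏ j, ((C j:ℝ)) ^ (C j))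
        = ∏ j, z j ^ (C j) := by
          rw [Finset.prod_congr rfl fun j _ => hzj j, Finset.prod_mul_distrib,
            Finset.prod_div_distrib, hNN]
      _ = (∏ j, z j ^ (w j))^N := hL.symm
      _ ≤ (∑ j, s j)^N := hpow
  have hq : (0:ℝ) < ((N:ℝ))^N / ∏ j, ((C j:ℝ)) ^ (C j) := by
    apply div_pos (by positivity)
    exact Finset.prod_pos fun j _ => pow_pos (by exact_mod_cast hCpos j) _
  rw [← le_div_iff₀ hq] at key
  refine key.trans_eq ?_
  have hCprodne : (∏ j, ((C j:ℝ)) ^ (C j)) ≠ 0 :=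
    ne_of_gt (Finset.prod_pos fun j _ => pow_pos (by exact_mod_cast hCpos j) _)
  field_simp

lemma inner_multinomial {m : ℕ} (c : ℕ) (v : Fin m → ℝ) :
    ∑ k ∈ Finset.piAntidiag (univ : Finset (Fin m)) c,
      ∏ i, (v i ^ k i / ((k i).factorial : ℝ))
      = (∑ i, v i) ^ c / (c.factorial : ℝ) := by
  rw [Finset.sum_pow_eq_sum_piAntidiag, Finset.sum_div]
  refine Finset.sum_congr rfl fun k hk => ?_
  rw [Finset.mem_piAntidiag] at hk
  have hspec := Nat.multinomial_spec (univ : Finset (Fin m)) k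
  rw [hk.1] at hspec
  have hfacne : (∏ i, ((k i).factorial : ℝ)) ≠ 0 :=
    ne_of_gt (Finset.prod_pos fun i _ => by exact_mod_cast Nat.factorial_pos (k i))
  have hcast : ((Nat.multinomial (univ : Finset (Fin m)) k : ℝ)) * ∏ i, ((k i).factorial : ℝ)
      = (c.factorial : ℝ) := by
    rw [← Nat.cast_prod, ← Nat.cast_mul, mul_comm, hspec]
  rw [Finset.prod_div_distrib]
  rw [eq_div_iff (by exact_mod_cast Nat.factorial_ne_zero c)]
  rw [div_mul_eq_mul_div, div_eq_iff hfacne, ← hcast]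
  ring

set_option maxHeartbeats 1000000 in
lemma key_col {m n N : ℕ} (hN : 0 < N)
    (R : Fin m → ℕ) (C : Fin n → ℕ) (hCpos : ∀ j, 0 < C j)
    (hRN : ∑ i, R i = N) (hCN : ∑ j, C j = N)
    (a : Fin m → Fin n → ℝ) (ha : ∀ i j, 0 < a i j) :
    ∑ D : {D : Fin m → Fin n → ℕ // (∀ i, ∑ j, D i j = R i) ∧ (∀ j, ∑ i, D i j = C j)},
      ∏ i, ∏ j, (a i j ^ D.1 i j / ((D.1 i j).factorial : ℝ))
      ≤ (∏ j, ((C j : ℝ)^(C j) / ((C j).factorial : ℝ))) * (((N:ℝ))^N)⁻¹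
          * (∑ i, ∑ j, a i j)^N := by
  classical
  let S := {D : Fin m → Fin n → ℕ // (∀ i, ∑ j, D i j = R i) ∧ (∀ j, ∑ i, D i j = C j)}
  show ∑ D : S, ∏ i, ∏ j, (a i j ^ D.1 i j / ((D.1 i j).factorial : ℝ)) ≤ _
  set T : Finset (Fin n → Fin m → ℕ) :=
    Fintype.piFinset (fun j => Finset.piAntidiag (univ : Finset (Fin m)) (C j)) with hT
  set F : (Fin n → Fin m → ℕ) → ℝ :=
    fun E => ∏ j, ∏ i, (a i j ^ E j i / ((E j i).factorial : ℝ)) with hF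
  have hFnonneg : ∀ E, 0 ≤ F E := fun E =>
    Finset.prod_nonneg fun j _ => Finset.prod_nonneg fun i _ =>
      div_nonneg (pow_nonneg (ha i j).le _) (by positivity)
  -- step 1: rewrite each term through transposition
  have h1 : ∀ D : S, (∏ i, ∏ j, (a i j ^ D.1 i j / ((D.1 i j).factorial : ℝ)))
      = F (fun j i => D.1 i j) := fun D => Finset.prod_comm
  -- step 2: compare with the sum over T
  have hinj : ∀ x ∈ (univ : Finset S), ∀ y ∈ (univ : Finset S),
      (fun j i => x.1 i j) = (fun j i => y.1 i j) → x = y := by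
    intro x _ y _ h
    apply Subtype.ext
    funext i j
    exact congrFun (congrFun h j) i
  have himage : Finset.image (fun D : S => (fun j i => D.1 i j)) univ ⊆ T := by
    intro E hE
    rw [Finset.mem_image] at hE
    obtain ⟨D, -, rfl⟩ := hE
    rw [hT, Fintype.mem_piFinset]
    intro j
    rw [Finset.mem_piAntidiag]
    exact ⟨D.2.2 j, fun i _ => Finset.mem_univ i⟩
  have h2 : ∑ D : S, F (fun j i => D.1 i j) ≤ ∑ E ∈ T, F E := by
    rw [← Finset.sum_image hinj]
    exact Finset.sum_le_sum_of_subset_of_nonneg himage fun E _ _ => hFnonneg E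
  -- step 3: factor the relaxed sum over columns
  have h3 : ∑ E ∈ T, F E
      = ∏ j, ∑ k ∈ Finset.piAntidiag (univ : Finset (Fin m)) (C j),
          ∏ i, (a i j ^ k i / ((k i).factorial : ℝ)) :=
    by exact (Finset.prod_univ_sum (fun j => Finset.piAntidiag (univ : Finset (Fin m)) (C j))
      (fun j k => ∏ i, (a i j ^ k i / ((k i).factorial : ℝ)))).symm
  -- step 4: multinomial identity
  have h4 : ∏ j, (∑ k ∈ Finset.piAntidiag (univ : Finset (Fin m)) (C j),
        ∏ i, (a i j ^ k i / ((k i).factorial : ℝ)))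
      = ∏ j, ((∑ i, a i j) ^ (C j) / ((C j).factorial : ℝ)) :=
    Finset.prod_congr rfl fun j _ => inner_multinomial (C j) (fun i => a i j)
  -- step 5: AM-GM
  have hs : ∀ j, 0 ≤ ∑ i, a i j := fun j => Finset.sum_nonneg fun i _ => (ha i j).le
  have h5 := amgm_pow hN C hCpos hCN (fun j => ∑ i, a i j) hs
  calc ∑ D : S, ∏ i, ∏ j, (a i j ^ D.1 i j / ((D.1 i j).factorial : ℝ))
      = ∑ D : S, F (fun j i => D.1 i j) := Finset.sum_congr rfl fun D _ => h1 D
    _ ≤ ∑ E ∈ T, F E := h2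
    _ = ∏ j, ((∑ i, a i j) ^ (C j) / ((C j).factorial : ℝ)) := by rw [h3, h4]
    _ = (∏ j, (∑ i, a i j) ^ (C j)) * ∏ j, (((C j).factorial : ℝ))⁻¹ := by
        rw [Finset.prod_div_distrib, div_eq_mul_inv, ← Finset.prod_inv_distrib]
    _ ≤ ((∏ j, ((C j : ℝ)) ^ (C j)) * (((N:ℝ))^N)⁻¹ * (∑ j, ∑ i, a i j)^N)
          * ∏ j, (((C j).factorial : ℝ))⁻¹ := by
        apply mul_le_mul_of_nonneg_right _ (Finset.prod_nonneg fun j _ => by positivity)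
        exact h5
    _ = (∏ j, ((C j : ℝ)^(C j) / ((C j).factorial : ℝ))) * (((N:ℝ))^N)⁻¹
          * (∑ i, ∑ j, a i j)^N := by
        rw [Finset.sum_comm, Finset.prod_div_distrib, div_eq_mul_inv,
          ← Finset.prod_inv_distrib]
        ring


lemma base_nonneg {m n : ℕ} (R : Fin m → ℕ) (C : Fin n → ℕ) (g : Fin m → Fin n → ℝ)
    (hg : ∀ i j, 0 < g i j) :
    0 ≤ ∑ D : {D : Fin m → Fin n → ℕ // (∀ i, ∑ j, D i j = R i) ∧ (∀ j, ∑ i, D i j = C j)},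
      ∏ i, ∏ j, (g i j ^ D.1 i j / ((D.1 i j).factorial : ℝ)) :=
  Finset.sum_nonneg fun D _ => Finset.prod_nonneg fun i _ => Finset.prod_nonneg fun j _ =>
    div_nonneg (pow_nonneg (hg i j).le _) (by positivity)

lemma base_le_omega_col {m n N : ℕ} (hN : 0 < N)
    (R : Fin m → ℕ) (C : Fin n → ℕ) (hCpos : ∀ j, 0 < C j)
    (hRN : ∑ i, R i = N) (hCN : ∑ j, C j = N)
    (g : Fin m → Fin n → ℝ) (hg : ∀ i j, 0 < g i j) :
    ∑ D : {D : Fin m → Fin n → ℕ // (∀ i, ∑ j, D i j = R i) ∧ (∀ j, ∑ i, D i j = C j)},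
      ∏ i, ∏ j, (g i j ^ D.1 i j / ((D.1 i j).factorial : ℝ))
      ≤ ((∏ j, ((C j : ℝ)^(C j) / ((C j).factorial : ℝ))) * (((N:ℝ))^N)⁻¹)
          * (scalingInf g (fun i => (R i : ℝ)) (fun j => (C j : ℝ)))^N := by
  classical
  set base := ∑ D : {D : Fin m → Fin n → ℕ //
      (∀ i, ∑ j, D i j = R i) ∧ (∀ j, ∑ i, D i j = C j)},
    ∏ i, ∏ j, (g i j ^ D.1 i j / ((D.1 i j).factorial : ℝ)) with hbase
  set K := (∏ j, ((C j : ℝ)^(C j) / ((C j).factorial : ℝ))) * (((N:ℝ))^N)⁻¹ with hK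
  have hb0 : 0 ≤ base := base_nonneg R C g hg
  have hKpos : 0 < K := by
    apply mul_pos (Finset.prod_pos fun j _ => div_pos
      (pow_pos (by exact_mod_cast hCpos j) _) (by positivity))
    positivity
  have hgP : g ∈ posMat m n := hg
  -- the bound for every feasible (x, y)
  have hstep : ∀ z ∈ scSet g (fun i => (R i : ℝ)) (fun j => (C j : ℝ)), base ≤ K * z^N := by
    rintro z ⟨x, y, hx, hy, hxR, hyC, rfl⟩
    have hterm : ∀ D : {D : Fin m → Fin n → ℕ //
        (∀ i, ∑ j, D i j = R i) ∧ (∀ j, ∑ i, D i j = C j)},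
        ∏ i, ∏ j, (g i j ^ D.1 i j / ((D.1 i j).factorial : ℝ))
          = ∏ i, ∏ j, ((g i j * x i * y j) ^ D.1 i j / ((D.1 i j).factorial : ℝ)) := by
      intro D
      have e1 : ∀ i j, (g i j * x i * y j) ^ D.1 i j / ((D.1 i j).factorial : ℝ)
          = (g i j ^ D.1 i j / ((D.1 i j).factorial : ℝ)) * (x i ^ D.1 i j * y j ^ D.1 i j) := by
        intro i j
        rw [mul_pow, mul_pow]
        ring
      calc ∏ i, ∏ j, (g i j ^ D.1 i j / ((D.1 i j).factorial : ℝ))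
          = (∏ i, ∏ j, (g i j ^ D.1 i j / ((D.1 i j).factorial : ℝ)))
            * ((∏ i, x i ^ ((R i : ℕ) : ℝ)) * (∏ j, y j ^ ((C j : ℕ) : ℝ))) := by
            rw [hxR, hyC]; ring
        _ = (∏ i, ∏ j, (g i j ^ D.1 i j / ((D.1 i j).factorial : ℝ)))
            * ((∏ i, x i ^ (R i)) * (∏ j, y j ^ (C j))) := by
            simp only [Real.rpow_natCast]
        _ = (∏ i, ∏ j, (g i j ^ D.1 i j / ((D.1 i j).factorial : ℝ)))
            * ((∏ i, ∏ j, x i ^ D.1 i j) * (∏ i, ∏ j, y j ^ D.1 i j)) := by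
            congr 2
            · refine Finset.prod_congr rfl fun i _ => ?_
              rw [Finset.prod_pow_eq_pow_sum, D.2.1 i]
            · rw [Finset.prod_comm]
              refine Finset.prod_congr rfl fun j _ => ?_
              rw [Finset.prod_pow_eq_pow_sum, D.2.2 j]
        _ = ∏ i, ∏ j, ((g i j * x i * y j) ^ D.1 i j / ((D.1 i j).factorial : ℝ)) := by
            simp only [e1, Finset.prod_mul_distrib]
    have hapos : ∀ i j, 0 < g i j * x i * y j := fun i j =>
      mul_pos (mul_pos (hg i j) (hx i)) (hy j)
    calc base = ∑ D : {D : Fin m → Fin n → ℕ //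
        (∀ i, ∑ j, D i j = R i) ∧ (∀ j, ∑ i, D i j = C j)},
        ∏ i, ∏ j, ((g i j * x i * y j) ^ D.1 i j / ((D.1 i j).factorial : ℝ)) :=
          Finset.sum_congr rfl fun D _ => hterm D
      _ ≤ (∏ j, ((C j : ℝ)^(C j) / ((C j).factorial : ℝ))) * (((N:ℝ))^N)⁻¹
            * (∑ i, ∑ j, g i j * x i * y j)^N :=
          key_col hN R C hCpos hRN hCN (fun i j => g i j * x i * y j) hapos
      _ = K * (∑ i, ∑ j, g i j * x i * y j)^N := by rw [hK]
  -- pass to the infimum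
  have hne : (scSet g (fun i => (R i : ℝ)) (fun j => (C j : ℝ))).Nonempty :=
    ⟨_, SSet_mem_sum g _ _⟩
  set L := scalingInf g (fun i => (R i : ℝ)) (fun j => (C j : ℝ)) with hLdef
  have hL0 : 0 ≤ L := scalingInf_nonneg g _ _ hgP
  set c : ℝ := (base / K) ^ ((N:ℝ)⁻¹) with hc
  have hcN : c ^ N = base / K := by
    rw [hc]
    exact Real.rpow_inv_natCast_pow (div_nonneg hb0 hKpos.le) hN.ne'
  have hc0 : 0 ≤ c := Real.rpow_nonneg (div_nonneg hb0 hKpos.le) _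
  have hcb : ∀ z ∈ scSet g (fun i => (R i : ℝ)) (fun j => (C j : ℝ)), c ≤ z := by
    intro z hz
    have h1 : base ≤ K * z^N := hstep z hz
    have hz0 : 0 ≤ z := SSet_nonneg g _ _ hgP z hz
    have h2 : c ^ N ≤ z ^ N := by
      rw [hcN, div_le_iff₀ hKpos]
      linarith [h1]
    exact le_of_pow_le_pow_left₀ hN.ne' hz0 h2
  have hcL : c ≤ L := le_csInf hne hcb
  have hfin : base = K * c ^ N := by
    rw [hcN]
    field_simp
  rw [hfin]
  exact mul_le_mul_of_nonneg_left (pow_le_pow_left₀ hc0 hcL N) hKpos.le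

lemma scSet_transpose {m n : ℕ} (g : Fin m → Fin n → ℝ) (R' : Fin m → ℝ) (C' : Fin n → ℝ) :
    scSet (fun j i => g i j) C' R' = scSet g R' C' := by
  ext z
  constructor
  · rintro ⟨x, y, hx, hy, hxC, hyR, rfl⟩
    refine ⟨y, x, hy, hx, hyR, hxC, ?_⟩
    rw [Finset.sum_comm]
    exact Finset.sum_congr rfl fun j _ => Finset.sum_congr rfl fun i _ => by ring
  · rintro ⟨x, y, hx, hy, hxR, hyC, rfl⟩
    refine ⟨y, x, hy, hx, hyC, hxR, ?_⟩
    rw [Finset.sum_comm]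
    exact Finset.sum_congr rfl fun i _ => Finset.sum_congr rfl fun j _ => by ring

lemma scalingInf_transpose {m n : ℕ} (g : Fin m → Fin n → ℝ)
    (R' : Fin m → ℝ) (C' : Fin n → ℝ) :
    scalingInf (fun j i => g i j) C' R' = scalingInf g R' C' := by
  rw [scalingInf_eq_sInf, scalingInf_eq_sInf, scSet_transpose]

def tableEquiv {m n : ℕ} (R : Fin m → ℕ) (C : Fin n → ℕ) :
    {D : Fin m → Fin n → ℕ // (∀ i, ∑ j, D i j = R i) ∧ (∀ j, ∑ i, D i j = C j)} ≃
    {D : Fin n → Fin m → ℕ // (∀ j, ∑ i, D j i = C j) ∧ (∀ i, ∑ j, D j i = R i)} where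
  toFun D := ⟨fun j i => D.1 i j, D.2.2, D.2.1⟩
  invFun E := ⟨fun i j => E.1 j i, E.2.2, E.2.1⟩
  left_inv D := rfl
  right_inv E := rfl

lemma base_le_omega_row {m n N : ℕ} (hN : 0 < N)
    (R : Fin m → ℕ) (C : Fin n → ℕ) (hRpos : ∀ i, 0 < R i)
    (hRN : ∑ i, R i = N) (hCN : ∑ j, C j = N)
    (g : Fin m → Fin n → ℝ) (hg : ∀ i j, 0 < g i j) :
    ∑ D : {D : Fin m → Fin n → ℕ // (∀ i, ∑ j, D i j = R i) ∧ (∀ j, ∑ i, D i j = C j)},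
      ∏ i, ∏ j, (g i j ^ D.1 i j / ((D.1 i j).factorial : ℝ))
      ≤ ((∏ i, ((R i : ℝ)^(R i) / ((R i).factorial : ℝ))) * (((N:ℝ))^N)⁻¹)
          * (scalingInf g (fun i => (R i : ℝ)) (fun j => (C j : ℝ)))^N := by
  have h := base_le_omega_col hN C R hRpos hCN hRN (fun j i => g i j) (fun j i => hg i j)
  rw [scalingInf_transpose] at h
  refine le_trans (le_of_eq ?_) h
  refine Fintype.sum_equiv (tableEquiv R C) _ _ fun D => ?_
  exact Finset.prod_comm

theorem tableWeight_upper_bound_integral {m n N : ℕ}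
    (W : Fin m → Fin n → ℝ) (hW : ∀ i j, 0 < W i j)
    (R : Fin m → ℕ) (C : Fin n → ℕ)
    (hRpos : ∀ i, 0 < R i) (hCpos : ∀ j, 0 < C j)
    (hRN : ∑ i, R i = N) (hCN : ∑ j, C j = N) :
    tableWeight R C W ≤
      ((N : ℝ) ^ N)⁻¹ * min (omegaVec R) (omegaVec C) *
        ∫ G, scalingInf G (fun i => (R i : ℝ)) (fun j => (C j : ℝ)) ^ N
          ∂(expMeasure W) := by
  classical
  rcases Nat.eq_zero_or_pos N with hN0 | hN
  · -- degenerate case `N = 0`, so `m = n = 0`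
    subst hN0
    obtain rfl : m = 0 := by
      rcases Nat.eq_zero_or_pos m with h | hm'
      · exact h
      · exfalso
        have h1 := Finset.single_le_sum (f := R) (fun _ _ => Nat.zero_le _)
          (Finset.mem_univ ⟨0, hm'⟩)
        have h2 := hRpos ⟨0, hm'⟩
        omega
    obtain rfl : n = 0 := by
      rcases Nat.eq_zero_or_pos n with h | hn'
      · exact h
      · exfalso
        have h1 := Finset.single_le_sum (f := C) (fun _ _ => Nat.zero_le _)
          (Finset.mem_univ ⟨0, hn'⟩)
        have h2 := hCpos ⟨0, hn'⟩
        omega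
    have hTW : tableWeight R C W = 1 := by
      rw [tableWeight]
      haveI : Unique {D : Fin 0 → Fin 0 → ℕ //
          (∀ i, ∑ j, D i j = R i) ∧ (∀ j, ∑ i, D i j = C j)} :=
        { default := ⟨fun i => Fin.elim0 i, fun i => Fin.elim0 i, fun j => Fin.elim0 j⟩
          uniq := fun D => Subtype.ext (funext fun i => Fin.elim0 i) }
      rw [tsum_eq_single default (fun b hb => absurd (Subsingleton.elim b default) hb)]
      simp
    rw [hTW]
    have hμ : expMeasure W = volume := by
      rw [expMeasure]
      have h1 : (fun G : Fin 0 → Fin 0 → ℝ => ENNReal.ofReal (∏ i, ∏ j,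
          if 0 < G i j then (W i j)⁻¹ * Real.exp (-(G i j) / W i j) else 0))
          = fun _ => 1 := by
        funext G
        simp
      rw [h1]
      exact MeasureTheory.withDensity_one
    rw [hμ]
    simp only [pow_zero, Nat.cast_zero, inv_one, one_mul]
    rw [MeasureTheory.integral_const]
    have hvol : (volume : Measure (Fin 0 → Fin 0 → ℝ)) Set.univ = 1 := by
      rw [volume_pi, Measure.pi_univ]
      simp
    have homega : omegaVec R = 1 := by rw [omegaVec]; simp
    have homegaC : omegaVec C = 1 := by rw [omegaVec]; simp
    rw [homega, homegaC, measureReal_def, hvol]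
    simp
  · -- main case
    have hm : m ≠ 0 := by
      rintro rfl
      simp only [Finset.univ_eq_empty, Finset.sum_empty] at hRN
      omega
    have hn : n ≠ 0 := by
      rintro rfl
      simp only [Finset.univ_eq_empty, Finset.sum_empty] at hCN
      omega
    obtain ⟨N', rfl⟩ : ∃ N', N = N' + 1 := ⟨N - 1, by omega⟩
    set N := N' + 1
    set f₀ : (Fin m → Fin n → ℝ) → ℝ :=
      fun G => scalingInf G (fun i => (R i : ℝ)) (fun j => (C j : ℝ)) with hf₀
    set K : ℝ := ((N : ℝ) ^ N)⁻¹ * min (omegaVec R) (omegaVec C) with hKdef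
    -- integrals of monomials
    have hval : ∀ d : Fin m → Fin n → ℕ,
        ∫ G, (∏ i, ∏ j, (G i j) ^ (d i j)) ∂(expMeasure W)
          = ∏ i, ∏ j, (((d i j).factorial : ℝ) * W i j ^ (d i j)) := by
      intro d
      rw [integral_expMeasure W hW, densW_mul_monomial, monomial_integral_vol W hW]
    have hint : ∀ d : Fin m → Fin n → ℕ,
        Integrable (fun G => ∏ i, ∏ j, (G i j) ^ (d i j)) (expMeasure W) := by
      intro d
      rw [integrable_expMeasure_iff W hW]
      have h1 : (fun G : Fin m → Fin n → ℝ => densW W G * ∏ i, ∏ j, (G i j) ^ (d i j))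
          = fun G => ∏ i, ∏ j, ((if 0 < G i j then (W i j)⁻¹ * Real.exp (-(G i j) / W i j)
            else 0) * (G i j) ^ (d i j)) := densW_mul_monomial W d
      rw [h1]
      exact monomial_integrable_vol W hW d
    -- the function "base"
    set base : (Fin m → Fin n → ℝ) → ℝ := fun G =>
      ∑ D : {D : Fin m → Fin n → ℕ // (∀ i, ∑ j, D i j = R i) ∧ (∀ j, ∑ i, D i j = C j)},
        ∏ i, ∏ j, (G i j ^ D.1 i j / ((D.1 i j).factorial : ℝ)) with hbase
    have hsplit : ∀ (d : Fin m → Fin n → ℕ) (G : Fin m → Fin n → ℝ),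
        (∏ i, ∏ j, (G i j ^ d i j / ((d i j).factorial : ℝ)))
          = (∏ i, ∏ j, G i j ^ d i j) * (∏ i, ∏ j, ((d i j).factorial : ℝ))⁻¹ := by
      intro d G
      rw [Finset.prod_congr rfl fun i _ => Finset.prod_div_distrib _ _,
        Finset.prod_div_distrib, div_eq_mul_inv]
    have hfacpos : ∀ d : Fin m → Fin n → ℕ,
        (0:ℝ) < ∏ i, ∏ j, ((d i j).factorial : ℝ) :=
      fun d => Finset.prod_pos fun i _ => Finset.prod_pos fun j _ => by
        exact_mod_cast Nat.factorial_pos _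
    have htermint : ∀ D : {D : Fin m → Fin n → ℕ //
        (∀ i, ∑ j, D i j = R i) ∧ (∀ j, ∑ i, D i j = C j)},
        Integrable (fun G => ∏ i, ∏ j, (G i j ^ D.1 i j / ((D.1 i j).factorial : ℝ)))
          (expMeasure W) := by
      intro D
      have h1 : (fun G : Fin m → Fin n → ℝ =>
          ∏ i, ∏ j, (G i j ^ D.1 i j / ((D.1 i j).factorial : ℝ)))
          = fun G => (∏ i, ∏ j, G i j ^ D.1 i j)
              * (∏ i, ∏ j, ((D.1 i j).factorial : ℝ))⁻¹ :=
        funext fun G => hsplit D.1 G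
      rw [h1]
      exact (hint D.1).mul_const _
    have hintbase : Integrable base (expMeasure W) :=
      MeasureTheory.integrable_finset_sum _ fun D _ => htermint D
    -- tableWeight equals the integral of base
    have hTWbase : tableWeight R C W = ∫ G, base G ∂(expMeasure W) := by
      have h1 : ∀ D : {D : Fin m → Fin n → ℕ //
          (∀ i, ∑ j, D i j = R i) ∧ (∀ j, ∑ i, D i j = C j)},
          (∏ i, ∏ j, W i j ^ D.1 i j)
            = ∫ G, (∏ i, ∏ j, (G i j ^ D.1 i j / ((D.1 i j).factorial : ℝ)))
                ∂(expMeasure W) := by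
        intro D
        have h2 : (fun G : Fin m → Fin n → ℝ =>
            ∏ i, ∏ j, (G i j ^ D.1 i j / ((D.1 i j).factorial : ℝ)))
            = fun G => (∏ i, ∏ j, G i j ^ D.1 i j)
                * (∏ i, ∏ j, ((D.1 i j).factorial : ℝ))⁻¹ :=
          funext fun G => hsplit D.1 G
        rw [h2, MeasureTheory.integral_mul_const, hval D.1]
        rw [Finset.prod_congr rfl fun (i : Fin m) _ => Finset.prod_mul_distrib,
          Finset.prod_mul_distrib]
        rw [mul_comm, ← mul_assoc, inv_mul_cancel₀ (hfacpos D.1).ne', one_mul]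
      calc tableWeight R C W
          = ∑ D : {D : Fin m → Fin n → ℕ //
              (∀ i, ∑ j, D i j = R i) ∧ (∀ j, ∑ i, D i j = C j)},
            ∏ i, ∏ j, W i j ^ D.1 i j := by
            rw [tableWeight]; exact tsum_fintype _
        _ = ∑ D : {D : Fin m → Fin n → ℕ //
              (∀ i, ∑ j, D i j = R i) ∧ (∀ j, ∑ i, D i j = C j)},
            ∫ G, (∏ i, ∏ j, (G i j ^ D.1 i j / ((D.1 i j).factorial : ℝ)))
              ∂(expMeasure W) := Finset.sum_congr rfl fun D _ => h1 D
        _ = ∫ G, base G ∂(expMeasure W) :=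
            (MeasureTheory.integral_finset_sum _ fun D _ => htermint D).symm
    -- pointwise bound on the positive orthant
    have hKmin : ∀ G ∈ posMat m n, base G ≤ K * f₀ G ^ N := by
      intro G hG
      have hGpos : ∀ i j, 0 < G i j := hG
      rcases le_total (omegaVec R) (omegaVec C) with hmin | hmin
      · have h := base_le_omega_row hN R C hRpos hRN hCN G hGpos
        refine h.trans (le_of_eq ?_)
        rw [hKdef, min_eq_left hmin, omegaVec, hf₀]
        ring
      · have h := base_le_omega_col hN R C hCpos hRN hCN G hGpos
        refine h.trans (le_of_eq ?_)
        rw [hKdef, min_eq_right hmin, omegaVec, hf₀]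
        ring
    -- integrability of the dominating function
    have hsingleint : ∀ (i : Fin m) (j : Fin n),
        Integrable (fun G : Fin m → Fin n → ℝ => (G i j) ^ N) (expMeasure W) := by
      intro i j
      have h1 : (fun G : Fin m → Fin n → ℝ => (G i j) ^ N)
          = fun G => ∏ a, ∏ b, (G a b) ^
              ((fun a b => if a = i then (if b = j then N else 0) else 0) a b) := by
        funext G
        rw [Fintype.prod_eq_single i fun a ha => ?_]
        · rw [Fintype.prod_eq_single j fun b hb => ?_]
          · simp
          · simp [hb]
        · simp [ha]
      rw [h1]
      exact hint _
    set Bnd : (Fin m → Fin n → ℝ) → ℝ := fun G =>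
      ((Fintype.card (Fin m × Fin n) : ℝ)) ^ N' *
        ∑ p : Fin m × Fin n, (G p.1 p.2) ^ N with hBnd
    have hBndint : Integrable Bnd (expMeasure W) := by
      apply Integrable.const_mul
      exact MeasureTheory.integrable_finset_sum _ fun p _ => hsingleint p.1 p.2
    -- a.e. domination
    have hdom : ∀ᵐ G ∂(expMeasure W), ‖f₀ G ^ N‖ ≤ Bnd G := by
      filter_upwards [ae_posMat W] with G hG
      have h0 : 0 ≤ f₀ G := scalingInf_nonneg G _ _ hG
      have h1 : ‖f₀ G ^ N‖ = f₀ G ^ N := by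
        rw [Real.norm_eq_abs, abs_of_nonneg (pow_nonneg h0 N)]
      rw [h1]
      have h2 : f₀ G ^ N ≤ (∑ i, ∑ j, G i j) ^ N :=
        pow_le_pow_left₀ h0 (scalingInf_le_sum G _ _ hG) N
      have hflat : (∑ i, ∑ j, G i j) = ∑ p : Fin m × Fin n, G p.1 p.2 := by
        rw [Fintype.sum_prod_type]
      have hps : ∀ p ∈ (Finset.univ : Finset (Fin m × Fin n)), 0 ≤ G p.1 p.2 :=
        fun p _ => (hG p.1 p.2).le
      have hJ := pow_sum_div_card_le_sum_pow (s := Finset.univ)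
        (f := fun p : Fin m × Fin n => G p.1 p.2) hps N'
      have hcardpos : (0:ℝ) < ((Finset.univ : Finset (Fin m × Fin n)).card : ℝ) ^ N' := by
        have : 0 < Fintype.card (Fin m × Fin n) := by
          simp only [Fintype.card_prod, Fintype.card_fin]
          exact Nat.mul_pos (Nat.pos_of_ne_zero hm) (Nat.pos_of_ne_zero hn)
        have hc : (Finset.univ : Finset (Fin m × Fin n)).card = Fintype.card (Fin m × Fin n) :=
          Finset.card_univ
        rw [hc]
        positivity
      rw [div_le_iff₀ hcardpos] at hJ
      calc f₀ G ^ N ≤ (∑ i, ∑ j, G i j) ^ N := h2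
        _ = (∑ p : Fin m × Fin n, G p.1 p.2) ^ (N' + 1) := by rw [hflat]
        _ ≤ (∑ p : Fin m × Fin n, (G p.1 p.2) ^ (N' + 1))
              * ((Finset.univ : Finset (Fin m × Fin n)).card : ℝ) ^ N' := hJ
        _ = Bnd G := by
            rw [hBnd, Finset.card_univ]
            ring
    -- measurability and integrability of f₀ ^ N
    have hAESM : MeasureTheory.AEStronglyMeasurable (fun G => f₀ G ^ N) (expMeasure W) := by
      have h1 := aemeasurable_scalingInf (fun i => (R i : ℝ)) (fun j => (C j : ℝ)) W
      exact (h1.pow_const N).aestronglyMeasurable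
    have hIntf : Integrable (fun G => f₀ G ^ N) (expMeasure W) :=
      Integrable.mono' hBndint hAESM hdom
    -- conclusion
    have hmono : ∫ G, base G ∂(expMeasure W)
        ≤ ∫ G, K * f₀ G ^ N ∂(expMeasure W) := by
      apply MeasureTheory.integral_mono_ae hintbase (hIntf.const_mul K)
      filter_upwards [ae_posMat W] with G hG
      exact hKmin G hG
    calc tableWeight R C W = ∫ G, base G ∂(expMeasure W) := hTWbase
      _ ≤ ∫ G, K * f₀ G ^ N ∂(expMeasure W) := hmono
      _ = K * ∫ G, f₀ G ^ N ∂(expMeasure W) := MeasureTheory.integral_const_mul K _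
      _ = ((N : ℝ) ^ N)⁻¹ * min (omegaVec R) (omegaVec C) *
            ∫ G, scalingInf G (fun i => (R i : ℝ)) (fun j => (C j : ℝ)) ^ N
              ∂(expMeasure W) := by rw [hKdef]
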